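/- With notation as in the construction of the decomposition space D for a line pattern L in a free group F: if there is a free basis B of F such that the Whitehead graph Wh_B(*) of L is disconnected, then D is disconnected. -/

import Mathlib

/-- The inverse of a letter `b^{±1}` of the free group on `β`. -/
def Letter.inv {β : Type*} (p : β × Bool) : β × Bool := (p.1, !p.2)

/-- The boundary at infinity of the Cayley tree of the free group on `β`:
infinite reduced words in the generators and their inverses. -/
def TreeBoundary (β : Type*) : Type _ :=
  {s : ℕ → β × Bool // ∀ n, s (n + 1) ≠ Letter.inv (s n)}

instance (β : Type*) [TopologicalSpace β] : TopologicalSpace (TreeBoundary β) :=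
  inferInstanceAs (TopologicalSpace {s : ℕ → β × Bool // ∀ n, s (n + 1) ≠ Letter.inv (s n)})

/-- The first `n` letters of a boundary point. -/
def prefixWord {β : Type*} (ξ : TreeBoundary β) (n : ℕ) : List (β × Bool) :=
  List.ofFn (fun m : Fin n => ξ.1 m)

/-- A sequence of vertices of the Cayley tree (elements of the free group)
converges to the boundary point `ξ` if, for every `n`, the reduced words of the
terms eventually all begin with the first `n` letters of `ξ`. -/
def ConvergesTo {β : Type*} [DecidableEq β] (u : ℕ → FreeGroup β)
    (ξ : TreeBoundary β) : Prop :=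
  ∀ n : ℕ, ∃ i₀ : ℕ, ∀ i ≥ i₀, (u i).toWord.take n = prefixWord ξ n

/-- A word of the free group is cyclically reduced if its first letter is not
the inverse of its last letter. -/
def CyclicallyReduced {β : Type*} [DecidableEq β] (w : FreeGroup β) : Prop :=
  ∀ h : w.toWord ≠ [], w.toWord.head h ≠ Letter.inv (w.toWord.getLast h)

/-- `w` is not a proper power. -/
def NotProperPower {β : Type*} (w : FreeGroup β) : Prop :=
  ∀ (v : FreeGroup β) (k : ℕ), 2 ≤ k → w ≠ v ^ k

/-- The endpoint-identification relation on the boundary of the tree defined by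
the line pattern generated by the words `w j`: two boundary points are related
iff they are equal or are the two endpoints of a line `g⟨w j⟩` of the pattern. -/
def EndRel {β : Type*} [DecidableEq β] {m : ℕ} (w : Fin m → FreeGroup β)
    (ξ η : TreeBoundary β) : Prop :=
  ξ = η ∨ ∃ (g : FreeGroup β) (j : Fin m),
    (ConvergesTo (fun i => g * w j ^ i) ξ ∧ ConvergesTo (fun i => g * (w j)⁻¹ ^ i) η) ∨
    (ConvergesTo (fun i => g * w j ^ i) η ∧ ConvergesTo (fun i => g * (w j)⁻¹ ^ i) ξ)

/-- Adjacency in the Whitehead graph `Wh_B(*)` of the line pattern generated by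
the words `w j`: for each occurrence of a two-letter subword `v̄ v'` in a cyclic
word `w j`, there is an edge between the vertices `v` and `v'`. -/
def WhAdj {β : Type*} [DecidableEq β] {m : ℕ} (w : Fin m → FreeGroup β)
    (a b : β × Bool) : Prop :=
  ∃ (j : Fin m) (i : Fin (w j).toWord.length),
    (a = Letter.inv ((w j).toWord.get i) ∧
      b = (w j).toWord.get ⟨((i : ℕ) + 1) % (w j).toWord.length, Nat.mod_lt _ i.pos⟩) ∨
    (b = Letter.inv ((w j).toWord.get i) ∧
      a = (w j).toWord.get ⟨((i : ℕ) + 1) % (w j).toWord.length, Nat.mod_lt _ i.pos⟩)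

set_option linter.unusedSectionVars false
set_option maxHeartbeats 1000000

namespace Aux
open List FreeGroup

variable {β : Type*} [DecidableEq β]

@[simp] lemma linv_linv (p : β × Bool) : Letter.inv (Letter.inv p) = p := by
  simp [Letter.inv]

/-- Reduced word predicate. -/
def Reduced (L : List (β × Bool)) : Prop := L.Chain' (fun a b => b ≠ Letter.inv a)

lemma reduce_eq_self {L : List (β × Bool)} (h : Reduced L) : FreeGroup.reduce L = L := by
  induction L with
  | nil => rfl
  | cons x L ih =>
    have htl : Reduced L := (List.isChain_cons.1 h).2
    rw [FreeGroup.reduce.cons, ih htl]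
    cases L with
    | nil => rfl
    | cons hd tl =>
      have hx : hd ≠ Letter.inv x := (List.isChain_cons.1 h).1 hd rfl
      dsimp only
      rw [if_neg]
      rintro ⟨h1, h2⟩
      exact hx (by simp [Letter.inv, Prod.ext_iff, h1.symm, h2])

lemma reduced_of_reduce_eq {L : List (β × Bool)} (h : FreeGroup.reduce L = L) : Reduced L := by
  show List.IsChain (fun a b => b ≠ Letter.inv a) L
  rw [List.isChain_iff_getElem]
  intro i hi
  intro hcon
  have hi1 : i + 1 < L.length := by omega
  have hi0 : i < L.length := by omega
  have e2 : L.drop (i+1) = L[i+1] :: L.drop (i+2) := (List.cons_getElem_drop_succ).symm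
  have e1 : L.drop i = L[i] :: L[i+1] :: L.drop (i+2) := by
    rw [← e2]; exact (List.cons_getElem_drop_succ).symm
  refine FreeGroup.reduce.not (L₁ := L) (L₂ := L.take i) (L₃ := L.drop (i+2))
    (x := L[i].1) (b := L[i].2) ?_
  rw [h]
  conv_lhs => rw [← List.take_append_drop i L, e1]
  have hcon' : L[i+1] = Letter.inv L[i] := by simpa [List.get_eq_getElem] using hcon
  rw [hcon']; rfl

lemma reduced_toWord (x : FreeGroup β) : Reduced x.toWord :=
  reduced_of_reduce_eq (FreeGroup.reduce_toWord x)

lemma length_invRev (L : List (β × Bool)) : (invRev L).length = L.length := by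
  simp [invRev]

lemma getElem_invRev (L : List (β × Bool)) (i : ℕ) (h : i < (invRev L).length) :
    (invRev L)[i] = Letter.inv (L[L.length - 1 - i]'(by
      have := length_invRev L; omega)) := by
  simp only [invRev, List.getElem_reverse, List.getElem_map, List.length_map]
  rfl

lemma reduced_invRev {L : List (β × Bool)} (h : Reduced L) : Reduced (invRev L) :=
  reduced_of_reduce_eq (by rw [FreeGroup.reduce_invRev, reduce_eq_self h])


/-- `k`-fold concatenation of a word. -/
def npow (W : List (β × Bool)) : ℕ → List (β × Bool)
  | 0 => []
  | k+1 => W ++ npow W k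

@[simp] lemma npow_zero (W : List (β × Bool)) : npow W 0 = [] := rfl
@[simp] lemma npow_succ (W : List (β × Bool)) (k : ℕ) : npow W (k+1) = W ++ npow W k := rfl

lemma mk_npow (W : List (β × Bool)) (k : ℕ) :
    FreeGroup.mk (npow W k) = (FreeGroup.mk W) ^ k := by
  induction k with
  | zero => rw [pow_zero, FreeGroup.one_eq_mk]; rfl
  | succ k ih => rw [pow_succ', ← ih, npow_succ, FreeGroup.mul_mk]

lemma length_npow (W : List (β × Bool)) (k : ℕ) :
    (npow W k).length = k * W.length := by
  induction k with
  | zero => simp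
  | succ k ih => rw [npow_succ, List.length_append, ih, Nat.succ_mul]; omega

lemma getElem_npow (W : List (β × Bool)) (hn : 0 < W.length) (k t : ℕ)
    (h : t < (npow W k).length) :
    (npow W k)[t] = W[t % W.length]'(Nat.mod_lt _ hn) := by
  induction k generalizing t with
  | zero => simp at h
  | succ k ih =>
    simp only [npow_succ, List.length_append] at h
    change (W ++ npow W k)[t]'(by simp [List.length_append]; omega) = _
    by_cases ht : t < W.length
    · rw [List.getElem_append_left ht]
      congr 1
      exact (Nat.mod_eq_of_lt ht).symm
    · push_neg at ht
      rw [List.getElem_append_right (by omega)]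
      rw [ih (t - W.length) (by simpa [List.length_append] using by omega)]
      congr 1
      exact (Nat.mod_eq_sub_mod ht).symm

lemma reduced_npow {W : List (β × Bool)} (hW : Reduced W) (hne : W ≠ [])
    (hcyc : W.head hne ≠ Letter.inv (W.getLast hne)) (k : ℕ) :
    Reduced (npow W k) := by
  induction k with
  | zero => exact List.isChain_nil
  | succ k ih =>
    rw [npow_succ]
    refine List.isChain_append.2 ⟨hW, ih, ?_⟩
    intro x hx y hy
    rw [List.getLast?_eq_getLast_of_ne_nil hne, Option.mem_some_iff] at hx
    cases k with
    | zero => simp at hy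
    | succ k =>
      rw [npow_succ, List.head?_append_of_ne_nil _ hne,
        List.head?_eq_head hne, Option.mem_some_iff] at hy
      subst hx; subst hy
      exact hcyc

/-! ### Cancellation -/

/-- The amount of cancellation in the product of reduced words `u * N`. -/
def canc (u N : List (β × Bool)) : ℕ :=
  Nat.findGreatest (fun c => u.drop (u.length - c) = invRev (N.take c)) u.length

lemma canc_le (u N : List (β × Bool)) : canc u N ≤ u.length :=
  Nat.findGreatest_le _

lemma canc_spec (u N : List (β × Bool)) :
    u.drop (u.length - canc u N) = invRev (N.take (canc u N)) :=
  Nat.findGreatest_spec (P := fun c => u.drop (u.length - c) = invRev (N.take c))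
    (m := 0) (Nat.zero_le _) (by simp [invRev])

lemma canc_max (u N : List (β × Bool)) {c : ℕ} (hm : canc u N < c) (hmL : c ≤ u.length) :
    u.drop (u.length - c) ≠ invRev (N.take c) :=
  Nat.findGreatest_is_greatest hm hmL

lemma reduce_cancel (u N : List (β × Bool)) (hu : Reduced u) (hN : Reduced N) :
    FreeGroup.reduce (u ++ N) =
      u.take (u.length - canc u N) ++ N.drop (canc u N) := by
  set c := canc u N with hc
  have hcle : c ≤ u.length := canc_le u N
  have hP : u.drop (u.length - c) = invRev (N.take c) := canc_spec u N
  have h1 : FreeGroup.mk u =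
      FreeGroup.mk (u.take (u.length - c)) * (FreeGroup.mk (N.take c))⁻¹ := by
    rw [FreeGroup.inv_mk, FreeGroup.mul_mk, ← hP, List.take_append_drop]
  have h2 : FreeGroup.mk N = FreeGroup.mk (N.take c) * FreeGroup.mk (N.drop c) := by
    rw [FreeGroup.mul_mk, List.take_append_drop]
  have hmk : FreeGroup.mk (u ++ N) =
      FreeGroup.mk (u.take (u.length - c) ++ N.drop c) := by
    rw [← FreeGroup.mul_mk, h1, h2, ← FreeGroup.mul_mk]
    group
  rw [FreeGroup.reduce.sound hmk]
  apply reduce_eq_self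
  refine List.isChain_append.2 ⟨List.IsChain.take hu _, List.IsChain.drop hN _, ?_⟩
  intro x hx y hy hcon
  -- extract indices
  have htne : u.take (u.length - c) ≠ [] := by
    intro e; rw [e] at hx; simp at hx
  have hLc : 1 ≤ u.length - c := by
    rcases Nat.eq_zero_or_pos (u.length - c) with h | h
    · exact absurd (by simp [h]) htne
    · exact h
  have hdne : N.drop c ≠ [] := by
    intro e; rw [e] at hy; simp at hy
  have hcN : c < N.length := by
    by_contra hcon2
    exact hdne (List.drop_eq_nil_of_le (by omega))
  have hlt : (u.take (u.length - c)).length = u.length - c := by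
    simp [List.length_take]
  have hx' : x = u[u.length - c - 1]'(by omega) := by
    rw [List.getLast?_eq_getLast_of_ne_nil htne, Option.mem_some_iff] at hx
    rw [← hx, List.getLast_eq_getElem]
    rw [List.getElem_take]
    congr 1
    omega
  have hy' : y = N[c]'hcN := by
    rw [List.head?_eq_head hdne, Option.mem_some_iff] at hy
    rw [← hy, List.head_eq_getElem_zero, List.getElem_drop]
    simp
  -- contradiction with maximality
  apply canc_max u N (c := c + 1) (by omega) (by omega)
  have e1 : u.drop (u.length - (c+1)) = x :: u.drop (u.length - c) := by
    have h0 : u.length - (c+1) < u.length := by omega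
    have : u.drop (u.length - (c+1)) =
        u[u.length - (c+1)] :: u.drop (u.length - (c+1) + 1) :=
      (List.cons_getElem_drop_succ).symm
    rw [this]
    congr 1
    · rw [hx']; congr 1 <;> omega
    · congr 1 <;> omega
  have e2 : N.take (c+1) = N.take c ++ [y] := by
    rw [List.take_succ, List.getElem?_eq_getElem hcN]
    rw [hy']; rfl
  rw [e1, e2, hP]
  have : invRev (N.take c ++ [y]) = Letter.inv y :: invRev (N.take c) := by
    simp [invRev, Letter.inv]
  rw [this, hcon, linv_linv]

lemma canc_getElem (u N : List (β × Bool)) (hcN : canc u N ≤ N.length) (i : ℕ)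
    (hi : i < canc u N) :
    u[u.length - canc u N + i]'(by have := canc_le u N; omega) =
      Letter.inv (N[canc u N - 1 - i]'(by omega)) := by
  have hcle := canc_le u N
  have hP := canc_spec u N
  have hdl : (u.drop (u.length - canc u N)).length = canc u N := by
    rw [List.length_drop]; omega
  have h1 := List.getElem_of_eq hP (i := i) (by omega)
  rw [List.getElem_drop] at h1
  rw [h1, getElem_invRev, List.getElem_take]
  have hidx : (N.take (canc u N)).length = canc u N := by
    rw [List.length_take]; omega
  simp only [hidx]

lemma toWord_mul (g x : FreeGroup β) (k : ℕ)
    (hred : Reduced (npow x.toWord k)) :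
    (g * x ^ k).toWord =
      g.toWord.take (g.toWord.length - canc g.toWord (npow x.toWord k)) ++
        (npow x.toWord k).drop (canc g.toWord (npow x.toWord k)) := by
  have h : g * x ^ k = FreeGroup.mk (g.toWord ++ npow x.toWord k) := by
    rw [← FreeGroup.mul_mk, FreeGroup.mk_toWord, mk_npow, FreeGroup.mk_toWord]
  rw [h, FreeGroup.toWord_mk, reduce_cancel _ _ (reduced_toWord g) hred]

lemma gel {γ : Type*} (l : List γ) {i j : ℕ} (hij : i = j) (hj : j < l.length) :
    l[i]'(hij ▸ hj) = l[j]'hj := by subst hij; rfl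

lemma getElem?_npow' (W : List (β × Bool)) (hn : 0 < W.length) (k t : ℕ)
    (ht : t < k * W.length) :
    (npow W k)[t]? = W[t % W.length]? := by
  rw [List.getElem?_eq_getElem (by rw [length_npow]; omega),
    List.getElem?_eq_getElem (Nat.mod_lt _ hn), getElem_npow W hn]

lemma getElem?_invRev' (L : List (β × Bool)) (t : ℕ) (ht : t < L.length) :
    (invRev L)[t]? = (L[L.length - 1 - t]?).map Letter.inv := by
  rw [List.getElem?_eq_getElem (by rw [length_invRev]; omega),
    List.getElem?_eq_getElem (show L.length - 1 - t < L.length by omega),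
    getElem_invRev, Option.map_some]

lemma canc_getElem?' (u N : List (β × Bool)) (hcN : canc u N ≤ N.length) (i : ℕ)
    (hi : i < canc u N) :
    u[u.length - canc u N + i]? = (N[canc u N - 1 - i]?).map Letter.inv := by
  rw [List.getElem?_eq_getElem (by have := canc_le u N; omega),
    List.getElem?_eq_getElem (show canc u N - 1 - i < N.length by omega),
    canc_getElem u N hcN i hi, Option.map_some]

lemma head_mul_lt (g x : FreeGroup β) (k : ℕ) (hred : Reduced (npow x.toWord k))
    (hc : canc g.toWord (npow x.toWord k) < g.toWord.length) :
    (g * x ^ k).toWord[0]? = g.toWord[0]? := by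
  rw [toWord_mul g x k hred]
  rw [List.getElem?_append_left (by rw [List.length_take]; omega)]
  rw [List.getElem?_take_of_lt (by omega)]

lemma head_mul_eq (g x : FreeGroup β) (k : ℕ) (hred : Reduced (npow x.toWord k))
    (hn : 0 < x.toWord.length)
    (hc : canc g.toWord (npow x.toWord k) = g.toWord.length)
    (hk : g.toWord.length < k * x.toWord.length) :
    (g * x ^ k).toWord[0]? = x.toWord[g.toWord.length % x.toWord.length]? := by
  rw [toWord_mul g x k hred, hc, Nat.sub_self, List.take_zero, List.nil_append,
    List.getElem?_drop, Nat.add_zero]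
  exact getElem?_npow' x.toWord hn k _ hk

lemma head_u_of_full (g x : FreeGroup β) (k : ℕ) (hn : 0 < x.toWord.length)
    (hc : canc g.toWord (npow x.toWord k) = g.toWord.length)
    (hL : 1 ≤ g.toWord.length)
    (hk : g.toWord.length ≤ k * x.toWord.length) :
    g.toWord[0]? =
      (x.toWord[(g.toWord.length - 1) % x.toWord.length]?).map Letter.inv := by
  have hcN : canc g.toWord (npow x.toWord k) ≤ (npow x.toWord k).length := by
    rw [length_npow]; omega
  have t := canc_getElem?' g.toWord (npow x.toWord k) hcN 0 (by omega)
  rw [hc] at t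
  rw [show g.toWord.length - g.toWord.length + 0 = 0 by omega] at t
  rw [show g.toWord.length - 1 - 0 = g.toWord.length - 1 by omega] at t
  rw [getElem?_npow' x.toWord hn k (g.toWord.length - 1) (by omega)] at t
  exact t

lemma last_u_of_pos (u N : List (β × Bool)) (hcN : canc u N ≤ N.length)
    (h1 : 1 ≤ canc u N) :
    u[u.length - 1]? = (N[0]?).map Letter.inv := by
  have hcle := canc_le u N
  have t := canc_getElem?' u N hcN (canc u N - 1) (by omega)
  rw [show u.length - canc u N + (canc u N - 1) = u.length - 1 by omega] at t
  rw [show canc u N - 1 - (canc u N - 1) = 0 by omega] at t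
  exact t

lemma mod_succ_pred (n L : ℕ) (hn : 0 < n) (hL : 1 ≤ L) :
    ((L - 1) % n + 1) % n = L % n := by
  rw [Nat.mod_add_mod, show L - 1 + 1 = L by omega]

lemma mod2 (n L : ℕ) (hn : 0 < n) (hL : 1 ≤ L) :
    (n - 1 - L % n + 1) % n = n - 1 - (L - 1) % n := by
  have h1 : (L - 1) % n < n := Nat.mod_lt _ hn
  have h2 : L % n < n := Nat.mod_lt _ hn
  have h3 : ((L - 1) % n + 1) % n = L % n := mod_succ_pred n L hn hL
  rcases Nat.lt_or_ge ((L - 1) % n) (n - 1) with h | h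
  · have h4 : (L - 1) % n + 1 < n := by omega
    rw [Nat.mod_eq_of_lt h4] at h3
    rw [Nat.mod_eq_of_lt (by omega)]
    omega
  · have he : (L - 1) % n = n - 1 := by omega
    rw [he] at h3
    have h5 : L % n = 0 := by
      rw [← h3, show n - 1 + 1 = n by omega, Nat.mod_self]
    rw [h5, he, show n - 1 - 0 + 1 = n by omega, Nat.mod_self]
    omega

lemma take_one_getElem? {l : List (β × Bool)} {a : β × Bool} (h : l.take 1 = [a]) :
    l[0]? = some a := by
  cases l with
  | nil => simp at h
  | cons b t =>
    simp only [List.take_succ_cons, List.take_zero] at h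
    injection h with h1 _
    simp [h1]

lemma cyc_invRev {W : List (β × Bool)} (hWne : W ≠ [])
    (hcyc : W.head hWne ≠ Letter.inv (W.getLast hWne)) (h : invRev W ≠ []) :
    (invRev W).head h ≠ Letter.inv ((invRev W).getLast h) := by
  have hn : 0 < W.length := List.length_pos_iff.2 hWne
  rw [List.head_eq_getElem_zero, List.getLast_eq_getElem]
  rw [getElem_invRev W 0 (by rw [length_invRev]; omega)]
  rw [gel (invRev W) (show (invRev W).length - 1 = W.length - 1 by rw [length_invRev])
    (by rw [length_invRev]; omega)]
  rw [getElem_invRev W (W.length - 1) (by rw [length_invRev]; omega)]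
  rw [gel W (show W.length - 1 - (W.length - 1) = 0 by omega) hn]
  rw [gel W (show W.length - 1 - 0 = W.length - 1 by omega) (by omega)]
  rw [linv_linv]
  intro e
  apply hcyc
  rw [List.head_eq_getElem_zero hWne, List.getLast_eq_getElem]
  exact e.symm

lemma not_both {g x : FreeGroup β} {k : ℕ} (hxne : x.toWord ≠ [])
    (hcyc : x.toWord.head hxne ≠ Letter.inv (x.toWord.getLast hxne))
    (hk : g.toWord.length ≤ k * x.toWord.length)
    (hp : 1 ≤ canc g.toWord (npow x.toWord k))
    (hp' : 1 ≤ canc g.toWord (npow x⁻¹.toWord k)) : False := by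
  have hn : 0 < x.toWord.length := List.length_pos_iff.2 hxne
  have hL : 1 ≤ g.toWord.length := le_trans hp (canc_le _ _)
  have hWinv : x⁻¹.toWord = invRev x.toWord := FreeGroup.toWord_inv _
  have hcN : canc g.toWord (npow x.toWord k) ≤ (npow x.toWord k).length := by
    rw [length_npow]; exact le_trans (canc_le _ _) hk
  have hcN' : canc g.toWord (npow x⁻¹.toWord k) ≤ (npow x⁻¹.toWord k).length := by
    rw [length_npow, hWinv, length_invRev]; exact le_trans (canc_le _ _) hk
  have t1 := last_u_of_pos g.toWord (npow x.toWord k) hcN hp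
  have t2 := last_u_of_pos g.toWord (npow x⁻¹.toWord k) hcN' hp'
  rw [getElem?_npow' x.toWord hn k 0 (by omega)] at t1
  rw [Nat.zero_mod] at t1
  rw [hWinv] at t2
  rw [getElem?_npow' (invRev x.toWord) (by rw [length_invRev]; omega) k 0
    (by rw [length_invRev]; omega)] at t2
  rw [Nat.zero_mod, getElem?_invRev' x.toWord 0 hn] at t2
  rw [show x.toWord.length - 1 - 0 = x.toWord.length - 1 by omega] at t2
  rw [List.getElem?_eq_getElem hn, Option.map_some] at t1
  rw [List.getElem?_eq_getElem (show x.toWord.length - 1 < _ by omega),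
    Option.map_some, Option.map_some, linv_linv] at t2
  have he := Option.some.inj (t1.symm.trans t2)
  apply hcyc
  rw [List.head_eq_getElem_zero hxne, List.getLast_eq_getElem]
  rw [← he, linv_linv]

lemma key {m : ℕ} (w : Fin m → FreeGroup β) (A : Set (β × Bool))
    (hA : ∀ a b : β × Bool, WhAdj w a b → (a ∈ A ↔ b ∈ A))
    (h1 : ∀ j, w j ≠ 1) (h2 : ∀ j, CyclicallyReduced (w j))
    (g : FreeGroup β) (j : Fin m) (ξ η : TreeBoundary β)
    (hξ : ConvergesTo (fun i => g * w j ^ i) ξ)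
    (hη : ConvergesTo (fun i => g * (w j)⁻¹ ^ i) η) :
    (ξ.1 0 ∈ A ↔ η.1 0 ∈ A) := by
  obtain ⟨i₀, hξ1⟩ := hξ 1
  obtain ⟨i₁, hη1⟩ := hη 1
  have hWne : (w j).toWord ≠ [] := fun e => h1 j (FreeGroup.toWord_eq_nil_iff.1 e)
  have hn : 0 < (w j).toWord.length := List.length_pos_iff.2 hWne
  have hW : Reduced (w j).toWord := reduced_toWord _
  have hcyc : (w j).toWord.head hWne ≠ Letter.inv ((w j).toWord.getLast hWne) := h2 j hWne
  have hWinv : ((w j)⁻¹).toWord = invRev (w j).toWord := FreeGroup.toWord_inv _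
  have hinvne : invRev (w j).toWord ≠ [] := by
    intro e
    apply hWne
    have h9 : (w j).toWord.length = 0 := by rw [← length_invRev, e]; rfl
    exact List.length_eq_zero_iff.1 h9
  have hlen' : ((w j)⁻¹).toWord.length = (w j).toWord.length := by
    rw [hWinv, length_invRev]
  have hn' : 0 < ((w j)⁻¹).toWord.length := by omega
  -- adjacency in the Whitehead graph
  have adj : ∀ (t : ℕ) (ht : t < (w j).toWord.length),
      ((Letter.inv ((w j).toWord[t]'ht)) ∈ A ↔
        ((w j).toWord[(t+1) % (w j).toWord.length]'(Nat.mod_lt _ hn)) ∈ A) := by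
    intro t ht
    refine hA _ _ ⟨j, ⟨t, ht⟩, Or.inl ⟨?_, ?_⟩⟩
    · simp [List.get_eq_getElem]
    · simp [List.get_eq_getElem]
  -- choose a large exponent k
  set k := i₀ + i₁ + g.toWord.length + 1 with hkdef
  have hkk : k ≤ k * (w j).toWord.length := Nat.le_mul_of_pos_right k hn
  have hk1 : g.toWord.length < k * (w j).toWord.length := by omega
  have hk1' : g.toWord.length < k * ((w j)⁻¹).toWord.length := by
    rw [hlen']; exact hk1
  have hNred : Reduced (npow (w j).toWord k) := reduced_npow hW hWne hcyc k
  have hN'red : Reduced (npow ((w j)⁻¹).toWord k) := by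
    rw [hWinv]
    exact reduced_npow (reduced_invRev hW) hinvne (cyc_invRev hWne hcyc hinvne) k
  -- first letters of the two approximating sequences
  have ha := hξ1 k (by omega)
  have hb := hη1 k (by omega)
  have hpreξ : prefixWord ξ 1 = [ξ.1 0] := by
    simp [prefixWord, List.ofFn_succ]
  have hpreη : prefixWord η 1 = [η.1 0] := by
    simp [prefixWord, List.ofFn_succ]
  rw [hpreξ] at ha
  rw [hpreη] at hb
  have ha0 : (g * w j ^ k).toWord[0]? = some (ξ.1 0) := take_one_getElem? ha
  have hb0 : (g * (w j)⁻¹ ^ k).toWord[0]? = some (η.1 0) := take_one_getElem? hb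
  have hcle : canc g.toWord (npow (w j).toWord k) ≤ g.toWord.length := canc_le _ _
  have hcle' : canc g.toWord (npow ((w j)⁻¹).toWord k) ≤ g.toWord.length := canc_le _ _
  by_cases hcL : canc g.toWord (npow (w j).toWord k) = g.toWord.length
  · by_cases hcL' : canc g.toWord (npow ((w j)⁻¹).toWord k) = g.toWord.length
    · -- both sides cancel fully: the based vertex lies on the line, L = 0
      rcases Nat.eq_zero_or_pos g.toWord.length with hL0 | hL0
      · have e1 := head_mul_eq g (w j) k hNred hn hcL hk1
        rw [hL0, Nat.zero_mod] at e1
        have e2 := head_mul_eq g ((w j)⁻¹) k hN'red hn' hcL' hk1'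
        rw [hL0, Nat.zero_mod, hWinv, getElem?_invRev' _ 0 hn] at e2
        rw [show (w j).toWord.length - 1 - 0 = (w j).toWord.length - 1 by omega] at e2
        rw [List.getElem?_eq_getElem (show (w j).toWord.length - 1 < _ by omega),
          Option.map_some] at e2
        rw [List.getElem?_eq_getElem hn] at e1
        have hya : ξ.1 0 = (w j).toWord[0]'hn := Option.some.inj (ha0.symm.trans e1)
        have hyb : η.1 0 = Letter.inv ((w j).toWord[(w j).toWord.length - 1]'(by omega)) :=
          Option.some.inj (hb0.symm.trans e2)
        rw [hya, hyb]
        have hadj := adj ((w j).toWord.length - 1) (by omega)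
        rw [gel (w j).toWord
          (show ((w j).toWord.length - 1 + 1) % (w j).toWord.length = 0 by
            rw [Nat.sub_add_cancel hn, Nat.mod_self]) hn] at hadj
        exact hadj.symm
      · exact (not_both hWne hcyc (le_of_lt hk1) (by omega) (by omega)).elim
    · -- ξ side cancels fully, η side does not
      have hL1 : 1 ≤ g.toWord.length := by omega
      have e1 := head_mul_eq g (w j) k hNred hn hcL hk1
      rw [List.getElem?_eq_getElem (Nat.mod_lt _ hn)] at e1
      have hya : ξ.1 0 =
          (w j).toWord[g.toWord.length % (w j).toWord.length]'(Nat.mod_lt _ hn) :=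
        Option.some.inj (ha0.symm.trans e1)
      have e2 := head_mul_lt g ((w j)⁻¹) k hN'red (by omega)
      have u0 := head_u_of_full g (w j) k hn hcL hL1 (le_of_lt hk1)
      rw [u0] at e2
      rw [List.getElem?_eq_getElem (Nat.mod_lt _ hn), Option.map_some] at e2
      have hyb : η.1 0 = Letter.inv
          ((w j).toWord[(g.toWord.length - 1) % (w j).toWord.length]'(Nat.mod_lt _ hn)) :=
        Option.some.inj (hb0.symm.trans e2)
      rw [hya, hyb]
      have hadj := adj ((g.toWord.length - 1) % (w j).toWord.length) (Nat.mod_lt _ hn)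
      rw [gel (w j).toWord (mod_succ_pred (w j).toWord.length g.toWord.length hn hL1)
        (Nat.mod_lt _ hn)] at hadj
      exact hadj.symm
  · by_cases hcL' : canc g.toWord (npow ((w j)⁻¹).toWord k) = g.toWord.length
    · -- η side cancels fully, ξ side does not
      have hL1 : 1 ≤ g.toWord.length := by omega
      have e1 := head_mul_lt g (w j) k hNred (by omega)
      have u0 := head_u_of_full g ((w j)⁻¹) k hn' hcL' hL1 (le_of_lt hk1')
      rw [hlen', hWinv] at u0
      rw [getElem?_invRev' _ _ (Nat.mod_lt _ hn)] at u0
      rw [List.getElem?_eq_getElem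
        (show (w j).toWord.length - 1 - (g.toWord.length - 1) % (w j).toWord.length <
          (w j).toWord.length by omega), Option.map_some, Option.map_some,
        linv_linv] at u0
      rw [u0] at e1
      have hya : ξ.1 0 = (w j).toWord[(w j).toWord.length - 1 -
          (g.toWord.length - 1) % (w j).toWord.length]'(by omega) :=
        Option.some.inj (ha0.symm.trans e1)
      have e2 := head_mul_eq g ((w j)⁻¹) k hN'red hn' hcL' hk1'
      rw [hlen', hWinv, getElem?_invRev' _ _ (Nat.mod_lt _ hn)] at e2
      rw [List.getElem?_eq_getElem
        (show (w j).toWord.length - 1 - g.toWord.length % (w j).toWord.length <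
          (w j).toWord.length by omega), Option.map_some] at e2
      have hyb : η.1 0 = Letter.inv ((w j).toWord[(w j).toWord.length - 1 -
          g.toWord.length % (w j).toWord.length]'(by omega)) :=
        Option.some.inj (hb0.symm.trans e2)
      rw [hya, hyb]
      have hadj := adj ((w j).toWord.length - 1 - g.toWord.length % (w j).toWord.length)
        (by omega)
      rw [gel (w j).toWord (mod2 (w j).toWord.length g.toWord.length hn hL1)
        (by have := Nat.mod_lt (g.toWord.length - 1) hn; omega)] at hadj
      exact hadj.symm
    · -- no full cancellation on either side: same first letter
      have e1 := head_mul_lt g (w j) k hNred (by omega)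
      have e2 := head_mul_lt g ((w j)⁻¹) k hN'red (by omega)
      rw [e1] at ha0
      rw [e2] at hb0
      rw [Option.some.inj (ha0.symm.trans hb0)]

end Aux


/-- If for some free basis the Whitehead graph of the line pattern is
disconnected (its vertex set splits into two nonempty parts with no edges
between them), then the decomposition space is disconnected. -/
theorem stmt_7 {β : Type*} [DecidableEq β] [Fintype β] [TopologicalSpace β]
    [DiscreteTopology β] {m : ℕ} (w : Fin m → FreeGroup β)
    (h1 : ∀ j, w j ≠ 1) (h2 : ∀ j, CyclicallyReduced (w j))
    (hdisc : ∃ A : Set (β × Bool), A.Nonempty ∧ Aᶜ.Nonempty ∧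
      ∀ a b : β × Bool, WhAdj w a b → (a ∈ A ↔ b ∈ A)) :
    ¬ PreconnectedSpace (Quot (EndRel w)) := by
  intro hpc
  haveI := hpc
  obtain ⟨A, ⟨p, hp⟩, ⟨q, hq⟩, hA⟩ := hdisc
  have sat : ∀ ξ η : TreeBoundary β, EndRel w ξ η → (ξ.1 0 ∈ A) = (η.1 0 ∈ A) := by
    intro ξ η h
    rcases h with h | ⟨g, j, ⟨hx, hy⟩ | ⟨hx, hy⟩⟩
    · rw [h]
    · exact propext (Aux.key w A hA h1 h2 g j ξ η hx hy)
    · exact propext (Aux.key w A hA h1 h2 g j η ξ hx hy).symm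
  set Φ : Quot (EndRel w) → Prop :=
    Quot.lift (fun ξ : TreeBoundary β => ξ.1 0 ∈ A) sat with hΦ
  have hpre : Quot.mk (EndRel w) ⁻¹' {z | Φ z} = {ξ : TreeBoundary β | ξ.1 0 ∈ A} := rfl
  have hcont : Continuous (fun ξ : TreeBoundary β => ξ.1 0) :=
    (continuous_apply 0).comp continuous_subtype_val
  have hClopen : IsClopen {z | Φ z} := by
    constructor
    · exact (isQuotientMap_quot_mk.isClosed_preimage).1
        (by rw [hpre]; exact (isClosed_discrete A).preimage hcont)
    · exact (isQuotientMap_quot_mk.isOpen_preimage).1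
        (by rw [hpre]; exact (isOpen_discrete A).preimage hcont)
  have hconst : ∀ (p : β × Bool),
      (∀ n, (fun _ : ℕ => p) (n+1) ≠ Letter.inv ((fun _ : ℕ => p) n)) := by
    intro p n h
    have h2 := congrArg Prod.snd h
    simp [Letter.inv] at h2
  rcases isClopen_iff.1 hClopen with h | h
  · have hmem : Quot.mk (EndRel w) ⟨fun _ => p, hconst p⟩ ∈ {z | Φ z} := hp
    rw [h] at hmem
    exact hmem
  · have hmem : Quot.mk (EndRel w) ⟨fun _ => q, hconst q⟩ ∈ {z | Φ z} := by
      rw [h]; exact Set.mem_univ _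
    exact hq hmem
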